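/- Let X_s ∈ ℝ^{n_s×d} and y_s ∈ ℝ^{n_s} for s = 1,…,T, and let Λ_0, Λ_1, …, Λ_T ∈ ℝ^{d×d} be symmetric positive definite. Define A_t = Λ_t + Σ_{s=1}^t X_sᵀX_s, b_t = Σ_{s=1}^t X_sᵀy_s (b_0 = 0), A_0 = Λ_0, the iterates θ_t = A_t^{-1} b_{t-1} and θ̃_t = A_{t-1}^{-1} b_{t-1}, and the functions L̃_t(θ) = θᵀΛ_tθ + Σ_{s=1}^t ‖X_sθ − y_s‖₂². Then for every t ∈ [T]: ‖X_tθ_t − y_t‖₂² + L̃_{t-1}(θ̃_t) − L̃_t(θ̃_{t+1}) = (θ̃_{t+1} − θ_t)ᵀ A_t (θ̃_{t+1} − θ_t) − (θ̃_t − θ_t)ᵀ A_{t-1} (θ̃_t − θ_t) − θ_tᵀ(Λ_t − Λ_{t-1})θ_t. -/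

import Mathlib

open Matrix Finset

noncomputable section

section Aux

variable {d : ℕ}

private lemma aux_sum_mulVec {α : Type*} (s : Finset α) (M : α → Matrix (Fin d) (Fin d) ℝ)
    (w : Fin d → ℝ) : (∑ a ∈ s, M a).mulVec w = ∑ a ∈ s, (M a).mulVec w := by
  funext i
  simp [Matrix.mulVec, dotProduct, Matrix.sum_apply, Finset.sum_mul]
  rw [Finset.sum_comm]

private lemma aux_dot_sum {α : Type*} (s : Finset α) (f : α → Fin d → ℝ) (z : Fin d → ℝ) :
    z ⬝ᵥ (∑ a ∈ s, f a) = ∑ a ∈ s, z ⬝ᵥ f a := by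
  simp [dotProduct, Finset.sum_apply, Finset.mul_sum]
  rw [Finset.sum_comm]

private lemma aux_sum_dot {α : Type*} (s : Finset α) (f : α → Fin d → ℝ) (z : Fin d → ℝ) :
    (∑ a ∈ s, f a) ⬝ᵥ z = ∑ a ∈ s, f a ⬝ᵥ z := by
  simp [dotProduct, Finset.sum_apply, Finset.sum_mul]
  rw [Finset.sum_comm]

private lemma aux_symm_dot (M : Matrix (Fin d) (Fin d) ℝ) (hM : Mᵀ = M)
    (x z : Fin d → ℝ) : x ⬝ᵥ M.mulVec z = z ⬝ᵥ M.mulVec x := by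
  rw [Matrix.dotProduct_mulVec, ← Matrix.mulVec_transpose, hM, dotProduct_comm]

private lemma aux_sq_expand {m : ℕ} (Xm : Matrix (Fin m) (Fin d) ℝ) (ym : Fin m → ℝ)
    (w : Fin d → ℝ) :
    (∑ i, ((Xm.mulVec w - ym) i) ^ 2)
      = w ⬝ᵥ (Xmᵀ * Xm).mulVec w - 2 * ((Xmᵀ.mulVec ym) ⬝ᵥ w) + ym ⬝ᵥ ym := by
  have h1 : (∑ i, ((Xm.mulVec w - ym) i) ^ 2) = (Xm.mulVec w - ym) ⬝ᵥ (Xm.mulVec w - ym) := by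
    simp [dotProduct, sq]
  rw [h1, sub_dotProduct, dotProduct_sub, dotProduct_sub]
  have h2 : (Xm.mulVec w) ⬝ᵥ (Xm.mulVec w) = w ⬝ᵥ (Xmᵀ * Xm).mulVec w := by
    rw [← Matrix.mulVec_mulVec, Matrix.dotProduct_mulVec (v := w), ← Matrix.mulVec_transpose,
      Matrix.transpose_transpose, dotProduct_comm]
  have h3 : (Xmᵀ.mulVec ym) ⬝ᵥ w = ym ⬝ᵥ (Xm.mulVec w) := by
    rw [Matrix.mulVec_transpose, ← Matrix.dotProduct_mulVec]
  have h4 : (Xm.mulVec w) ⬝ᵥ ym = ym ⬝ᵥ (Xm.mulVec w) := dotProduct_comm _ _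
  rw [h2, h4, ← h3]
  ring

private lemma aux_expand_quad (M : Matrix (Fin d) (Fin d) ℝ) (x z : Fin d → ℝ) :
    (x - z) ⬝ᵥ M.mulVec (x - z)
      = x ⬝ᵥ M.mulVec x - x ⬝ᵥ M.mulVec z - z ⬝ᵥ M.mulVec x + z ⬝ᵥ M.mulVec z := by
  rw [Matrix.mulVec_sub, sub_dotProduct, dotProduct_sub, dotProduct_sub]
  ring

end Aux

/-- **Key algebraic identity in the MultiVAW analysis.**  With
`A_t = Λ_t + ∑_{s=1}^t XₛᵀXₛ` (`A_0 = Λ_0`), `b_t = ∑_{s=1}^t Xₛᵀyₛ` (`b_0 = 0`),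
iterates `θ_t = A_t⁻¹ b_{t-1}`, `θ̃_t = A_{t-1}⁻¹ b_{t-1}`, and
`L̃_t(θ) = θᵀΛ_tθ + ∑_{s=1}^t ‖Xₛθ − yₛ‖₂²`, for every `t ∈ [T]`:
`‖X_tθ_t − y_t‖₂² + L̃_{t-1}(θ̃_t) − L̃_t(θ̃_{t+1})
  = (θ̃_{t+1} − θ_t)ᵀ A_t (θ̃_{t+1} − θ_t) − (θ̃_t − θ_t)ᵀ A_{t-1} (θ̃_t − θ_t)
    − θ_tᵀ(Λ_t − Λ_{t-1})θ_t`. -/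
theorem multivaw_per_step_identity
    (T d : ℕ) (n : ℕ → ℕ)
    (X : (s : ℕ) → Matrix (Fin (n s)) (Fin d) ℝ)
    (y : (s : ℕ) → Fin (n s) → ℝ)
    (Λ : ℕ → Matrix (Fin d) (Fin d) ℝ)
    (hΛ : ∀ t ≤ T, (Λ t).PosDef)
    (A : ℕ → Matrix (Fin d) (Fin d) ℝ)
    (hA : ∀ t ≤ T, A t = Λ t + ∑ s ∈ Icc 1 t, (X s)ᵀ * X s)
    (b : ℕ → (Fin d → ℝ))
    (hb : ∀ t ≤ T, b t = ∑ s ∈ Icc 1 t, (X s)ᵀ.mulVec (y s))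
    (θ θt : ℕ → (Fin d → ℝ))
    (hθ : ∀ t, 1 ≤ t → t ≤ T → θ t = (A t)⁻¹.mulVec (b (t - 1)))
    (hθt : ∀ t, 1 ≤ t → t ≤ T + 1 → θt t = (A (t - 1))⁻¹.mulVec (b (t - 1)))
    (L : ℕ → (Fin d → ℝ) → ℝ)
    (hL : ∀ t ≤ T, ∀ v : Fin d → ℝ,
      L t v = v ⬝ᵥ (Λ t).mulVec v + ∑ s ∈ Icc 1 t, ∑ i, ((X s).mulVec v - y s) i ^ 2)
    (t : ℕ) (ht : t ∈ Icc 1 T) :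
    (∑ i, ((X t).mulVec (θ t) - y t) i ^ 2) + L (t - 1) (θt t) - L t (θt (t + 1))
      = (θt (t + 1) - θ t) ⬝ᵥ (A t).mulVec (θt (t + 1) - θ t)
        - (θt t - θ t) ⬝ᵥ (A (t - 1)).mulVec (θt t - θ t)
        - θ t ⬝ᵥ (Λ t - Λ (t - 1)).mulVec (θ t) := by
  rw [Finset.mem_Icc] at ht
  obtain ⟨ht1, htT⟩ := ht
  -- symmetry of Λ and A
  have hΛsymm : ∀ k ≤ T, (Λ k)ᵀ = Λ k := by
    intro k hk
    have := (hΛ k hk).isHermitian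
    simpa [Matrix.IsHermitian, Matrix.conjTranspose_eq_transpose_of_trivial] using this
  have hAsymm : ∀ k ≤ T, (A k)ᵀ = A k := by
    intro k hk
    rw [hA k hk, Matrix.transpose_add, hΛsymm k hk, Matrix.transpose_sum]
    congr 1
    refine Finset.sum_congr rfl fun s _ => ?_
    rw [Matrix.transpose_mul, Matrix.transpose_transpose]
  -- positive definiteness, invertibility of A
  have hApd : ∀ k ≤ T, (A k).PosDef := by
    intro k hk
    rw [hA k hk]
    refine (hΛ k hk).add_posSemidef ?_
    refine Finset.sum_induction _ _ (fun a b ha hb => ha.add hb) (Matrix.PosSemidef.zero) ?_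
    intro s _
    have := Matrix.posSemidef_conjTranspose_mul_self (X s)
    simpa [Matrix.conjTranspose_eq_transpose_of_trivial] using this
  have hAinv : ∀ k ≤ T, ∀ x : Fin d → ℝ, (A k).mulVec ((A k)⁻¹.mulVec x) = x := by
    intro k hk x
    rw [Matrix.mulVec_mulVec, Matrix.mul_nonsing_inv _ ((hApd k hk).det_pos.ne'.isUnit), Matrix.one_mulVec]
  -- abbreviations
  obtain ⟨k, rfl⟩ : ∃ k, t = k + 1 := ⟨t - 1, (Nat.succ_pred_eq_of_pos ht1).symm⟩
  have hk1 : k + 1 - 1 = k := by omega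
  have hkT : k ≤ T := le_trans (Nat.le_succ k) htT
  set w := θ (k + 1) with hw
  set u := θt (k + 1) with hu
  set v := θt (k + 2) with hv
  -- mulVec identities
  have hAw : (A (k + 1)).mulVec w = b k := by
    rw [hw, hθ (k + 1) ht1 htT, hk1]; exact hAinv (k + 1) htT _
  have hAu : (A k).mulVec u = b k := by
    rw [hu, hθt (k + 1) ht1 (le_trans htT (Nat.le_succ T)), hk1]
    exact hAinv k hkT _
  have hAv : (A (k + 1)).mulVec v = b (k + 1) := by
    have : k + 2 - 1 = k + 1 := rfl
    rw [hv, hθt (k + 2) (by omega) (by omega), this]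
    exact hAinv (k + 1) htT _
  -- quadratic sum expansion
  have QS : ∀ j ≤ T, ∀ z : Fin d → ℝ,
      (∑ s ∈ Icc 1 j, ∑ i, ((X s).mulVec z - y s) i ^ 2)
        = z ⬝ᵥ (A j).mulVec z - z ⬝ᵥ (Λ j).mulVec z - 2 * ((b j) ⬝ᵥ z)
          + ∑ s ∈ Icc 1 j, (y s ⬝ᵥ y s) := by
    intro j hj z
    rw [hA j hj, hb j hj, Matrix.add_mulVec, dotProduct_add, aux_sum_mulVec,
      aux_dot_sum, aux_sum_dot]
    simp_rw [aux_sq_expand]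
    rw [Finset.sum_add_distrib, Finset.sum_sub_distrib, ← Finset.mul_sum]
    ring
  -- rewrite L values
  rw [hL (k + 1 - 1) (by omega) u, hL (k + 1) htT v, hk1, QS k hkT u, QS (k + 1) htT v]
  -- split the top sum over Icc 1 (k+1)
  have hsplit : ∀ f : ℕ → ℝ, (∑ s ∈ Icc 1 (k + 1), f s) = (∑ s ∈ Icc 1 k, f s) + f (k + 1) :=
    fun f => Finset.sum_Icc_succ_top (by omega) f
  rw [hsplit fun s => y s ⬝ᵥ y s]
  have h1k : (1:ℕ) ≤ k + 1 := by omega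
  -- expand the single squared-residual term at time k+1
  have hsq : (∑ i, ((X (k + 1)).mulVec w - y (k + 1)) i ^ 2)
      = w ⬝ᵥ ((X (k + 1))ᵀ * X (k + 1)).mulVec w
        - 2 * (((X (k + 1))ᵀ.mulVec (y (k + 1))) ⬝ᵥ w) + y (k + 1) ⬝ᵥ y (k + 1) :=
    aux_sq_expand _ _ _
  -- relate A (k+1) and A k, b (k+1) and b k
  have hAstep : (X (k + 1))ᵀ * X (k + 1) = A (k + 1) - A k + Λ k - Λ (k + 1) := by
    rw [hA (k + 1) htT, hA k hkT, Finset.sum_Icc_succ_top h1k]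
    abel
  have hbstep : (X (k + 1))ᵀ.mulVec (y (k + 1)) = b (k + 1) - b k := by
    rw [hb (k + 1) htT, hb k hkT, Finset.sum_Icc_succ_top h1k]
    abel
  rw [hsq, hAstep, hbstep]
  -- expand RHS quadratic forms
  rw [aux_expand_quad (A (k + 1)) v w, aux_expand_quad (A k) u w]
  -- expand all matrix sums/additions applied to vectors
  rw [Matrix.sub_mulVec, Matrix.add_mulVec, Matrix.sub_mulVec, dotProduct_sub, dotProduct_add,
    dotProduct_sub, Matrix.sub_mulVec, dotProduct_sub, sub_dotProduct]
  -- flip asymmetric quadratic terms using symmetry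
  have f1 : u ⬝ᵥ (A k).mulVec w = w ⬝ᵥ (A k).mulVec u := aux_symm_dot _ (hAsymm k hkT) _ _
  have f2 : w ⬝ᵥ (A (k + 1)).mulVec v = v ⬝ᵥ (A (k + 1)).mulVec w :=
    aux_symm_dot _ (hAsymm (k + 1) htT) _ _
  have key : w ⬝ᵥ b (k + 1) = v ⬝ᵥ b k := by
    have h := aux_symm_dot _ (hAsymm (k + 1) htT) w v
    rwa [hAv, hAw] at h
  rw [f1, f2, hAw, hAu, hAv]
  rw [dotProduct_comm (b k) w, dotProduct_comm (b k) u, dotProduct_comm (b (k + 1)) v,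
    dotProduct_comm (b (k + 1)) w, dotProduct_comm u (b k), dotProduct_comm v (b (k + 1)), key]
  ring

end
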